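/- For 1 ≤ p₁ ≤ p₂ ≤ q < ∞, the inclusion ℓ^{p₂}_q ⊆ ℓ^{p₁}_q holds, and ‖x‖_{ℓ^{p₁}_q} ≤ ‖x‖_{ℓ^{p₂}_q} for every x ∈ ℓ^{p₂}_q. -/

import Mathlib

open scoped ENNReal BigOperators

/-- Discrete Morrey norm over symmetric index sets `S_{m,N} = {m-N, …, m+N}`. -/
noncomputable def dnorm (p q : ℝ) (x : ℤ → ℝ) : ℝ≥0∞ :=
  ⨆ (m : ℤ) (N : ℕ), ((2 * N + 1 : ℝ≥0∞) ^ (1 / q - 1 / p)) *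
    ENNReal.ofReal ((∑ j ∈ Finset.Icc (m - N) (m + N), |x j| ^ p) ^ (1 / p))

/-- Discrete Morrey norm over arbitrary index intervals `S*_{k,n} = {k, …, k+n}`. -/
noncomputable def dnormStar (p q : ℝ) (x : ℤ → ℝ) : ℝ≥0∞ :=
  ⨆ (k : ℤ) (n : ℕ), ((n + 1 : ℝ≥0∞) ^ (1 / q - 1 / p)) *
    ENNReal.ofReal ((∑ j ∈ Finset.Icc k (k + n), |x j| ^ p) ^ (1 / p))

/-- Morrey norm on the real line. -/
noncomputable def mnormR (p q : ℝ) (f : ℝ → ℝ) : ℝ≥0∞ :=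
  ⨆ (a : ℝ) (r : Set.Ioi (0 : ℝ)),
    ENNReal.ofReal ((2 * r.1) ^ (1 / q - 1 / p) *
      (∫ t in (a - r.1)..(a + r.1), |f t| ^ p) ^ (1 / p))

/-- The step function `x̃(t) = ∑_j x_j χ_{[j,j+1)}(t)`, i.e. `x̃(t) = x ⌊t⌋`. -/
noncomputable def step (x : ℤ → ℝ) : ℝ → ℝ := fun t => x ⌊t⌋

/-- The set `S_n = {1 + 2^v + ⋯ + 2^{(n-1)v} + j·2^{nw} : j = 1, …, 2^{n(v-w)}}`. -/
def Sn (v w n : ℕ) : Set ℤ :=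
  {m | ∃ j : ℕ, 1 ≤ j ∧ j ≤ 2 ^ (n * (v - w)) ∧
    m = ((∑ i ∈ Finset.range n, 2 ^ (i * v) : ℕ) : ℤ) + (j : ℤ) * 2 ^ (n * w)}

/-- The sequence with `x_j = 1` iff `j ∈ {0,1} ∪ ⋃_{n≥1} S_n`, `x_j = 0` otherwise. -/
noncomputable def xseq (v w : ℕ) : ℤ → ℝ :=
  Set.indicator (({0, 1} : Set ℤ) ∪ ⋃ n ∈ Set.Ici 1, Sn v w n) 1

/-- `β_n = 1 + 2^v + ⋯ + 2^{nv}`. -/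
def beta (v n : ℕ) : ℕ := ∑ i ∈ Finset.range (n + 1), 2 ^ (i * v)

private lemma sum_rpow_le (p₁ p₂ : ℝ) (hp₁ : 0 < p₁) (h12 : p₁ ≤ p₂) (s : Finset ℤ)
    (a : ℤ → ℝ) (ha : ∀ j, 0 ≤ a j) :
    (∑ j ∈ s, a j ^ p₁) ^ (1 / p₁) ≤
      (s.card : ℝ) ^ (1 / p₁ - 1 / p₂) * (∑ j ∈ s, a j ^ p₂) ^ (1 / p₂) := by
  have hp₂ : 0 < p₂ := hp₁.trans_le h12
  set r : ℝ := p₂ / p₁ with hr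
  have hr1 : 1 ≤ r := (one_le_div hp₁).mpr h12
  have hr0 : r ≠ 0 := by positivity
  have H := Real.inner_le_weight_mul_Lp_of_nonneg s hr1 (fun _ => 1) (fun j => a j ^ p₁)
    (fun _ => zero_le_one) (fun j => Real.rpow_nonneg (ha j) _)
  simp only [one_mul, Finset.sum_const, nsmul_eq_mul, mul_one] at H
  have hpow : ∀ j, (a j ^ p₁) ^ r = a j ^ p₂ := by
    intro j
    rw [← Real.rpow_mul (ha j)]
    congr 1
    rw [hr, mul_comm, div_mul_cancel₀ _ hp₁.ne']
  calc (∑ j ∈ s, a j ^ p₁) ^ (1 / p₁)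
      ≤ ((s.card : ℝ) ^ (1 - r⁻¹) * (∑ j ∈ s, a j ^ p₂) ^ r⁻¹) ^ (1 / p₁) := by
        apply Real.rpow_le_rpow (Finset.sum_nonneg fun j _ => Real.rpow_nonneg (ha j) _)
        · have Hsum : (∑ j ∈ s, (a j ^ p₁) ^ r) = ∑ j ∈ s, a j ^ p₂ :=
            Finset.sum_congr rfl fun j _ => hpow j
          rw [← Hsum]; exact H
        · positivity
    _ = (s.card : ℝ) ^ (1 / p₁ - 1 / p₂) * (∑ j ∈ s, a j ^ p₂) ^ (1 / p₂) := by
        have hB : (0:ℝ) ≤ ∑ j ∈ s, a j ^ p₂ :=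
          Finset.sum_nonneg fun j _ => Real.rpow_nonneg (ha j) _
        have e1 : (1 - r⁻¹) * (1 / p₁) = 1 / p₁ - 1 / p₂ := by
          rw [hr]; field_simp
        have e2 : r⁻¹ * (1 / p₁) = 1 / p₂ := by
          rw [hr]; field_simp
        rw [Real.mul_rpow (by positivity) (by positivity),
          ← Real.rpow_mul (Nat.cast_nonneg _), ← Real.rpow_mul hB, e1, e2]

theorem stmt1 (p₁ p₂ q : ℝ) (hp₁ : 1 ≤ p₁) (h12 : p₁ ≤ p₂) (h2q : p₂ ≤ q) :
    ∀ x : ℤ → ℝ, dnorm p₁ q x ≤ dnorm p₂ q x := by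
  intro x
  have hp₁0 : 0 < p₁ := lt_of_lt_of_le one_pos hp₁
  refine iSup₂_le fun m N => ?_
  refine le_trans ?_ (le_iSup₂ (f := fun (m : ℤ) (N : ℕ) =>
    ((2 * N + 1 : ℝ≥0∞) ^ (1 / q - 1 / p₂)) *
      ENNReal.ofReal ((∑ j ∈ Finset.Icc (m - N) (m + N), |x j| ^ p₂) ^ (1 / p₂))) m N)
  set s : Finset ℤ := Finset.Icc (m - N) (m + N) with hs
  have hcard : s.card = 2 * N + 1 := by
    rw [hs, Int.card_Icc]; omega
  have key := sum_rpow_le p₁ p₂ hp₁0 h12 s (fun j => |x j|) (fun j => abs_nonneg _)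
  rw [hcard] at key
  push_cast at key
  have hn1 : (2 * (N : ℝ≥0∞) + 1) = ((2 * N + 1 : ℕ) : ℝ≥0∞) := by push_cast; ring
  have hn2 : (2 * (N : ℝ) + 1) = ((2 * N + 1 : ℕ) : ℝ) := by push_cast; ring
  have hn0 : ((2 * N + 1 : ℕ) : ℝ≥0∞) ≠ 0 := by simp
  have hntop : ((2 * N + 1 : ℕ) : ℝ≥0∞) ≠ ⊤ := ENNReal.natCast_ne_top _
  calc (2 * (N : ℝ≥0∞) + 1) ^ (1 / q - 1 / p₁) *
        ENNReal.ofReal ((∑ j ∈ s, |x j| ^ p₁) ^ (1 / p₁))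
      ≤ (2 * (N : ℝ≥0∞) + 1) ^ (1 / q - 1 / p₁) *
        ENNReal.ofReal ((2 * (N : ℝ) + 1) ^ (1 / p₁ - 1 / p₂) *
          (∑ j ∈ s, |x j| ^ p₂) ^ (1 / p₂)) := by
        exact mul_le_mul_right (ENNReal.ofReal_le_ofReal key) _
    _ = (2 * (N : ℝ≥0∞) + 1) ^ (1 / q - 1 / p₂) *
        ENNReal.ofReal ((∑ j ∈ s, |x j| ^ p₂) ^ (1 / p₂)) := by
        rw [ENNReal.ofReal_mul (by positivity), hn1, hn2,
          ← ENNReal.ofReal_rpow_of_pos (by positivity), ENNReal.ofReal_natCast,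
          ← mul_assoc, ← ENNReal.rpow_add _ _ hn0 hntop]
        ring_nf
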